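/- For any (k+1)×(k+1) matrix M over a commutative ring (or a field), the Desnanot–Jacobi identity holds: det(M) · det(M with row 1, row k+1, column 1 and column k+1 deleted) = det(M with row k+1 and column k+1 deleted) · det(M with row 1 and column 1 deleted) − det(M with row 1 and column k+1 deleted) · det(M with row k+1 and column 1 deleted). -/

import Mathlib

open Matrix

namespace DesnanotJacobiAux

variable {R : Type*} [CommRing R] {n : ℕ}

def djf (n : ℕ) : Fin 2 ⊕ Fin n → Fin (n + 2) :=
  Sum.elim ![0, Fin.last (n + 1)] fun k => (Fin.succ k).castSucc

lemma last_ne_zero : (Fin.last (n + 1) : Fin (n + 2)) ≠ 0 := by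
  simp [Fin.ext_iff]

lemma mid_ne_zero (k : Fin n) : ((Fin.succ k).castSucc : Fin (n + 2)) ≠ 0 := by
  simp [Fin.ext_iff]

lemma mid_ne_last (k : Fin n) : ((Fin.succ k).castSucc : Fin (n + 2)) ≠ Fin.last (n + 1) :=
  (Fin.castSucc_lt_last _).ne

lemma mid_inj {k l : Fin n} (h : ((Fin.succ k).castSucc : Fin (n + 2)) = (Fin.succ l).castSucc) :
    k = l :=
  Fin.succ_injective _ (Fin.castSucc_injective _ h)

lemma djf_bijective : Function.Bijective (djf n) := by
  constructor
  · rintro (i | k) (j | l) h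
    · fin_cases i <;> fin_cases j <;> simp_all [djf, Fin.ext_iff]
    · fin_cases i <;> simp only [djf, Sum.elim_inl, Sum.elim_inr, Fin.mk_zero, Fin.mk_one,
        Matrix.cons_val_zero, Matrix.cons_val_one, Matrix.head_cons] at h
      · exact ((mid_ne_zero l) h.symm).elim
      · exact ((mid_ne_last l) h.symm).elim
    · fin_cases j <;> simp only [djf, Sum.elim_inl, Sum.elim_inr, Fin.mk_zero, Fin.mk_one,
        Matrix.cons_val_zero, Matrix.cons_val_one, Matrix.head_cons] at h
      · exact ((mid_ne_zero k) h).elim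
      · exact ((mid_ne_last k) h).elim
    · exact congrArg Sum.inr (mid_inj (by simpa [djf] using h))
  · intro i
    induction i using Fin.cases with
    | zero => exact ⟨Sum.inl 0, rfl⟩
    | succ j =>
      induction j using Fin.lastCases with
      | last => exact ⟨Sum.inl 1, rfl⟩
      | cast l => exact ⟨Sum.inr l, by simp [djf, Fin.succ_castSucc, -Fin.castSucc_succ]⟩

noncomputable def dje (n : ℕ) : Fin 2 ⊕ Fin n ≃ Fin (n + 2) :=
  Equiv.ofBijective (djf n) djf_bijective

lemma dje_inl_zero : dje n (Sum.inl 0) = 0 := rfl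
lemma dje_inl_one : dje n (Sum.inl 1) = Fin.last (n + 1) := rfl
lemma dje_inr (k : Fin n) : dje n (Sum.inr k) = (Fin.succ k).castSucc := rfl

def djB (M : Matrix (Fin (n + 2)) (Fin (n + 2)) R) : Matrix (Fin (n + 2)) (Fin (n + 2)) R :=
  Matrix.of fun i j =>
    if j = 0 then M.adjugate i 0
    else if j = Fin.last (n + 1) then M.adjugate i (Fin.last (n + 1))
    else if i = j then 1 else 0

lemma det_djB (M : Matrix (Fin (n + 2)) (Fin (n + 2)) R) :
    (djB M).det =
      M.adjugate 0 0 * M.adjugate (Fin.last (n + 1)) (Fin.last (n + 1)) -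
      M.adjugate 0 (Fin.last (n + 1)) * M.adjugate (Fin.last (n + 1)) 0 := by
  have hb : (djB M).submatrix (dje n) (dje n) =
      fromBlocks
        !![M.adjugate 0 0, M.adjugate 0 (Fin.last (n + 1));
           M.adjugate (Fin.last (n + 1)) 0, M.adjugate (Fin.last (n + 1)) (Fin.last (n + 1))]
        0
        (Matrix.of fun (k : Fin n) (j : Fin 2) =>
          M.adjugate ((Fin.succ k).castSucc) (![0, Fin.last (n + 1)] j))
        1 := by
    ext i j
    rcases i with i | k <;> rcases j with j | l
    · fin_cases i <;> fin_cases j <;>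
        simp [dje, djB, djf, last_ne_zero, Equiv.ofBijective, Fin.mk_zero, Fin.mk_one]
    · fin_cases i <;>
        simp [dje, djB, djf, Equiv.ofBijective, Fin.mk_zero, Fin.mk_one,
          Fin.succ_ne_zero, mid_ne_last l, last_ne_zero, (mid_ne_zero l).symm,
          (mid_ne_last l).symm, -Fin.castSucc_succ]
    · fin_cases j <;>
        simp [dje, djB, djf, Equiv.ofBijective, Fin.mk_zero, Fin.mk_one, last_ne_zero]
    · show djB M ((Fin.succ k).castSucc) ((Fin.succ l).castSucc) = (1 : Matrix (Fin n) (Fin n) R) k l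
      simp [djB, Fin.succ_ne_zero, mid_ne_last l, Matrix.one_apply,
        Fin.castSucc_inj, Fin.succ_inj]
  rw [← Matrix.det_submatrix_equiv_self (dje n) (djB M), hb,
    Matrix.det_fromBlocks_zero₁₂, Matrix.det_one, mul_one, Matrix.det_fin_two_of]

lemma mul_djB (M : Matrix (Fin (n + 2)) (Fin (n + 2)) R) :
    (M * djB M).submatrix (dje n) (dje n) =
      fromBlocks
        !![M.det, 0; 0, M.det]
        (Matrix.of fun (i : Fin 2) (k : Fin n) =>
          M (![0, Fin.last (n + 1)] i) ((Fin.succ k).castSucc))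
        0
        (M.submatrix (fun k : Fin n => (Fin.succ k).castSucc)
          (fun k : Fin n => (Fin.succ k).castSucc)) := by
  have hcol : ∀ (i : Fin (n + 2)) (j : Fin (n + 2)), (j = 0 ∨ j = Fin.last (n + 1)) →
      (M * djB M) i j = M.det * (if i = j then 1 else 0) := by
    intro i j hj
    have h1 : (M * djB M) i j = (M * M.adjugate) i j := by
      rw [Matrix.mul_apply, Matrix.mul_apply]
      refine Finset.sum_congr rfl fun k _ => ?_
      rcases hj with rfl | rfl
      · simp [djB]
      · simp [djB, last_ne_zero]
    rw [h1, Matrix.mul_adjugate]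
    simp [Matrix.one_apply]
  have hmid : ∀ (i : Fin (n + 2)) (k : Fin n),
      (M * djB M) i ((Fin.succ k).castSucc) = M i ((Fin.succ k).castSucc) := by
    intro i k
    rw [Matrix.mul_apply]
    have hB : ∀ t, djB M t ((Fin.succ k).castSucc) =
        if t = (Fin.succ k).castSucc then 1 else 0 := by
      intro t
      simp [djB, Fin.succ_ne_zero, mid_ne_last k]
    simp [hB, -Fin.castSucc_succ]
  have h00 : (M * djB M) 0 0 = M.det := by
    rw [hcol _ _ (Or.inl rfl)]; simp
  have h0L : (M * djB M) 0 (Fin.last (n + 1)) = 0 := by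
    rw [hcol _ _ (Or.inr rfl)]; simp [(last_ne_zero (n := n)).symm]
  have hL0 : (M * djB M) (Fin.last (n + 1)) 0 = 0 := by
    rw [hcol _ _ (Or.inl rfl)]; simp [last_ne_zero (n := n)]
  have hLL : (M * djB M) (Fin.last (n + 1)) (Fin.last (n + 1)) = M.det := by
    rw [hcol _ _ (Or.inr rfl)]; simp
  have hk0 : ∀ k : Fin n, (M * djB M) ((Fin.succ k).castSucc) 0 = 0 := by
    intro k; rw [hcol _ _ (Or.inl rfl)]; simp [mid_ne_zero k]
  have hkL : ∀ k : Fin n, (M * djB M) ((Fin.succ k).castSucc) (Fin.last (n + 1)) = 0 := by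
    intro k; rw [hcol _ _ (Or.inr rfl)]; simp [mid_ne_last k]
  ext i j
  rcases i with i | k <;> rcases j with j | l
  · fin_cases i <;> fin_cases j <;>
      simp only [submatrix_apply, Fin.mk_zero, Fin.mk_one, dje_inl_zero, dje_inl_one,
        fromBlocks_apply₁₁, Matrix.cons_val_zero, Matrix.cons_val_one, Matrix.head_cons,
        h00, h0L, hL0, hLL] <;> simp
  · fin_cases i <;>
      simp only [submatrix_apply, Fin.mk_zero, Fin.mk_one, dje_inl_zero, dje_inl_one, dje_inr,
        fromBlocks_apply₁₂, Matrix.of_apply, Matrix.cons_val_zero, Matrix.cons_val_one,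
        Matrix.head_cons, hmid]
  · fin_cases j <;>
      simp only [submatrix_apply, Fin.mk_zero, Fin.mk_one, dje_inl_zero, dje_inl_one, dje_inr,
        fromBlocks_apply₂₁, Matrix.zero_apply, hk0 k, hkL k]
  · simp only [submatrix_apply, dje_inr, fromBlocks_apply₂₂, Matrix.submatrix_apply,
      hmid ((Fin.succ k).castSucc) l]

lemma key_mul (M : Matrix (Fin (n + 2)) (Fin (n + 2)) R) :
    M.det * (M.det *
      (M.submatrix (fun k : Fin n => k.succ.castSucc) (fun k : Fin n => k.succ.castSucc)).det) =
    M.det *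
      (M.adjugate 0 0 * M.adjugate (Fin.last (n + 1)) (Fin.last (n + 1)) -
       M.adjugate 0 (Fin.last (n + 1)) * M.adjugate (Fin.last (n + 1)) 0) := by
  have h2 : (M * djB M).det = M.det * (M.det *
      (M.submatrix (fun k : Fin n => k.succ.castSucc)
        (fun k : Fin n => k.succ.castSucc)).det) := by
    rw [← Matrix.det_submatrix_equiv_self (dje n) (M * djB M), mul_djB,
      Matrix.det_fromBlocks_zero₂₁, Matrix.det_fin_two_of]
    ring
  rw [← h2, Matrix.det_mul, det_djB]

lemma dj_adj (M : Matrix (Fin (n + 2)) (Fin (n + 2)) R) :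
    M.det *
      (M.submatrix (fun k : Fin n => k.succ.castSucc) (fun k : Fin n => k.succ.castSucc)).det =
    M.adjugate 0 0 * M.adjugate (Fin.last (n + 1)) (Fin.last (n + 1)) -
      M.adjugate 0 (Fin.last (n + 1)) * M.adjugate (Fin.last (n + 1)) 0 := by
  let A := mvPolynomialX (Fin (n + 2)) (Fin (n + 2)) ℤ
  have hgen : A.det *
      (A.submatrix (fun k : Fin n => k.succ.castSucc) (fun k : Fin n => k.succ.castSucc)).det =
      A.adjugate 0 0 * A.adjugate (Fin.last (n + 1)) (Fin.last (n + 1)) -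
        A.adjugate 0 (Fin.last (n + 1)) * A.adjugate (Fin.last (n + 1)) 0 := by
    exact mul_left_cancel₀ (det_mvPolynomialX_ne_zero _ ℤ) (key_mul A)
  let φ : MvPolynomial ((Fin (n + 2)) × (Fin (n + 2))) ℤ →ₐ[ℤ] R :=
    MvPolynomial.aeval fun p : (Fin (n + 2)) × (Fin (n + 2)) => M p.1 p.2
  have hA : φ.mapMatrix A = M := mvPolynomialX_mapMatrix_aeval ℤ M
  have hdet : φ A.det = M.det := by rw [← hA, AlgHom.map_det]
  have hsub : φ (A.submatrix (fun k : Fin n => k.succ.castSucc)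
      (fun k : Fin n => k.succ.castSucc)).det =
      (M.submatrix (fun k : Fin n => k.succ.castSucc)
        (fun k : Fin n => k.succ.castSucc)).det := by
    rw [← hA, AlgHom.mapMatrix_apply, Matrix.submatrix_map, ← AlgHom.mapMatrix_apply,
      AlgHom.map_det]
  have hadj : ∀ i j, φ (A.adjugate i j) = M.adjugate i j := by
    intro i j
    have := congrArg (fun N => N i j) (AlgHom.map_adjugate φ A)
    simpa [hA] using this
  have := congrArg φ hgen
  simp only [_root_.map_mul, _root_.map_sub, hdet, hsub, hadj] at this
  exact this

end DesnanotJacobiAux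

/-- Desnanot–Jacobi identity for an (n+2)×(n+2) matrix over a commutative ring.
`M.submatrix i.succAbove j.succAbove` is M with row i and column j deleted;
rows/columns `0` and `Fin.last` correspond to rows/columns 1 and n+2 in 1-based
indexing, and the inner minor deletes both of them. -/
theorem desnanot_jacobi {R : Type*} [CommRing R] {n : ℕ}
    (M : Matrix (Fin (n + 2)) (Fin (n + 2)) R) :
    M.det *
      (M.submatrix (fun k : Fin n => k.succ.castSucc)
        (fun k : Fin n => k.succ.castSucc)).det =
    (M.submatrix (Fin.last (n + 1)).succAbove (Fin.last (n + 1)).succAbove).det *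
      (M.submatrix (0 : Fin (n + 2)).succAbove (0 : Fin (n + 2)).succAbove).det -
    (M.submatrix (0 : Fin (n + 2)).succAbove (Fin.last (n + 1)).succAbove).det *
      (M.submatrix (Fin.last (n + 1)).succAbove (0 : Fin (n + 2)).succAbove).det := by
  rw [DesnanotJacobiAux.dj_adj M, Matrix.adjugate_fin_succ_eq_det_submatrix,
    Matrix.adjugate_fin_succ_eq_det_submatrix, Matrix.adjugate_fin_succ_eq_det_submatrix,
    Matrix.adjugate_fin_succ_eq_det_submatrix]
  have h1 : ((-1 : R)) ^ ((n + 1) + (n + 1)) = 1 := Even.neg_one_pow ⟨n + 1, rfl⟩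
  simp only [Fin.val_zero, Fin.val_last, add_zero, zero_add, pow_zero, one_mul, h1]
  rw [show ((-1 : R)) ^ (n + 1) *
      (M.submatrix (Fin.last (n + 1)).succAbove (0 : Fin (n + 2)).succAbove).det *
      ((-1 : R) ^ (n + 1) *
        (M.submatrix (0 : Fin (n + 2)).succAbove (Fin.last (n + 1)).succAbove).det) =
      ((-1 : R) ^ ((n + 1) + (n + 1))) *
        ((M.submatrix (Fin.last (n + 1)).succAbove (0 : Fin (n + 2)).succAbove).det *
         (M.submatrix (0 : Fin (n + 2)).succAbove (Fin.last (n + 1)).succAbove).det) by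
    rw [pow_add]; ring]
  rw [h1, one_mul]
  ring
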